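/- Let 0 < θ < 1, σ > 0, and let ξ : [1/2, 1] → ℝ satisfy ξ(t) ≥ ξ(1/2) ≥ 1 for all t ∈ [1/2,1], and suppose ξ(k) ≤ c₀ (h−k)^{−σ} ξ(h)^θ for all 1/2 ≤ k < h ≤ 1, for some constant c₀ > 0. Let 1 < b ≤ 2 be such that 1 − bθ > 0. Then there exists a constant c₁ > 1, independent of θ, b, σ, and ξ, such that ξ(1/2) ≤ c₁^{σb/((1−bθ)(b−1))} · c₀^{1/(1−bθ)}. -/

import Mathlib

open Real Filter

/-- Arithmetic core: from `0 ≤ G ≤ (lc + σL)/(1-θ)` and `L(b-1) ≤ 3b` deduce the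
final bound with exponent `1/(1-bθ)`. -/
private lemma aux_key (θ σ b lc L G : ℝ) (hθ0 : 0 < θ) (hθ1 : θ < 1) (hσ : 0 < σ)
    (hb1 : 1 < b) (hbθ : 0 < 1 - b * θ) (hL : 0 ≤ L) (hKey : L * (b - 1) ≤ 3 * b)
    (hG0 : 0 ≤ G) (hT : G ≤ (lc + σ * L) / (1 - θ)) :
    G ≤ 3 * (σ * b / ((1 - b * θ) * (b - 1))) + lc / (1 - b * θ) := by
  have hp : 0 < 1 - θ := by linarith
  have hr : 0 < b - 1 := by linarith
  have h0 : 0 ≤ lc + σ * L := by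
    have h := (le_div_iff₀ hp).1 (hG0.trans hT)
    linarith
  have h2 : 0 ≤ 3 * (σ * b) + lc * (b - 1) := by
    rcases le_or_gt 0 lc with h | h
    · nlinarith
    · nlinarith
  have f1 : 0 ≤ (1 - b * θ) * (σ * (3 * b) - σ * (L * (b - 1))) :=
    mul_nonneg hbθ.le (by nlinarith)
  have f2 : 0 ≤ (θ * (b - 1)) * (3 * (σ * b) + lc * (b - 1)) :=
    mul_nonneg (by positivity) h2
  have key : G * ((1 - b * θ) * (b - 1)) ≤ 3 * (σ * b) + lc * (b - 1) := by
    have h3 : G * (1 - θ) ≤ lc + σ * L := (le_div_iff₀ hp).1 hT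
    have h4 : (G * (1 - θ)) * ((1 - b * θ) * (b - 1)) ≤
        (lc + σ * L) * ((1 - b * θ) * (b - 1)) :=
      mul_le_mul_of_nonneg_right h3 (by positivity)
    have h5 : (lc + σ * L) * ((1 - b * θ) * (b - 1)) ≤
        (3 * (σ * b) + lc * (b - 1)) * (1 - θ) := by nlinarith [f1, f2]
    have h6 : (G * ((1 - b * θ) * (b - 1))) * (1 - θ) ≤
        (3 * (σ * b) + lc * (b - 1)) * (1 - θ) := by nlinarith [h4, h5]
    exact le_of_mul_le_mul_right h6 hp
  have hqr : (0:ℝ) < (1 - b * θ) * (b - 1) := by positivity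
  have := (le_div_iff₀ hqr).2 key
  calc G ≤ (3 * (σ * b) + lc * (b - 1)) / ((1 - b * θ) * (b - 1)) := this
    _ = 3 * (σ * b / ((1 - b * θ) * (b - 1))) + lc / (1 - b * θ) := by
        field_simp

set_option maxHeartbeats 1000000 in
/-- De Giorgi-type iteration lemma (Lemma 2.1 / `Lemma 64` of the paper). -/
theorem degiorgi_iteration :
    ∃ c₁ : ℝ, 1 < c₁ ∧
      ∀ (θ σ c₀ b : ℝ) (ξ : ℝ → ℝ),
        0 < θ → θ < 1 → 0 < σ → 0 < c₀ → 1 < b → b ≤ 2 → 0 < 1 - b * θ →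
        (∀ t : ℝ, 1/2 ≤ t → t ≤ 1 → ξ (1/2) ≤ ξ t) →
        1 ≤ ξ (1/2) →
        (∀ k h : ℝ, 1/2 ≤ k → k < h → h ≤ 1 →
          ξ k ≤ c₀ * (h - k) ^ (-σ) * (ξ h) ^ θ) →
        ξ (1/2) ≤ c₁ ^ (σ * b / ((1 - b * θ) * (b - 1))) * c₀ ^ (1 / (1 - b * θ)) := by
  refine ⟨Real.exp 3, ?_, ?_⟩
  · calc (1:ℝ) = Real.exp 0 := Real.exp_zero.symm
      _ < Real.exp 3 := Real.exp_lt_exp.2 (by norm_num)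
  intro θ σ c₀ b ξ hθ0 hθ1 hσ hc₀ hb1 hb2 hbθ hmono hξh hiter
  have hb0 : (0:ℝ) < b := by linarith
  have hr : (0:ℝ) < b - 1 := by linarith
  have hp : (0:ℝ) < 1 - θ := by linarith
  set β := Real.log b with hβ
  set lc := Real.log c₀ with hlc
  set α := Real.log 2 + β - Real.log (b - 1) with hα
  have hβ0 : 0 ≤ β := Real.log_nonneg (by linarith)
  have hβ2 : β ≤ Real.log 2 := Real.log_le_log hb0 hb2
  have hlb1 : Real.log (b - 1) ≤ 0 := Real.log_nonpos (by linarith) (by linarith)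
  have hl2pos : (0:ℝ) < Real.log 2 := Real.log_pos (by norm_num)
  have hα0 : Real.log 2 ≤ α := by rw [hα]; linarith
  -- the sequence of levels
  set t : ℕ → ℝ := fun n => 1 - 1 / (2 * b ^ n) with ht
  have hbn : ∀ n : ℕ, (0:ℝ) < b ^ n := fun n => pow_pos hb0 n
  have hbn1 : ∀ n : ℕ, (1:ℝ) ≤ b ^ n := fun n => one_le_pow₀ hb1.le
  have ht0 : t 0 = 1/2 := by simp [ht]; norm_num
  have hthalf : ∀ n, 1/2 ≤ t n := by
    intro n
    have h1 := hbn1 n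
    have h2 := hbn n
    have : 1 / (2 * b ^ n) ≤ 1/2 := by
      rw [div_le_div_iff₀ (by positivity) (by norm_num)]; nlinarith
    simp only [ht]; linarith
  have htlt1 : ∀ n, t n < 1 := by
    intro n
    have h2 := hbn n
    have : 0 < 1 / (2 * b ^ n) := by positivity
    simp only [ht]; linarith
  have htmono : ∀ n, t n < t (n+1) := by
    intro n
    have h2 := hbn n
    have hlt : (b:ℝ) ^ n < b ^ (n+1) := by
      rw [pow_succ]; nlinarith
    have : 1 / (2 * b ^ (n+1)) < 1 / (2 * b ^ n) := by
      rw [div_lt_div_iff₀ (by positivity) (by positivity)]; nlinarith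
    simp only [ht]; linarith
  have hξt : ∀ n, 1 ≤ ξ (t n) := fun n => hξh.trans (hmono _ (hthalf n) (htlt1 n).le)
  have hξ1 : 1 ≤ ξ 1 := hξh.trans (hmono 1 (by norm_num) le_rfl)
  set x : ℕ → ℝ := fun n => Real.log (ξ (t n)) with hx
  have hx0 : ∀ n, 0 ≤ x n := fun n => Real.log_nonneg (hξt n)
  set u : ℕ → ℝ := fun n => lc + σ * (α + n * β) with hu
  -- the one-step inequality
  have hstep : ∀ n, x n ≤ u n + θ * x (n+1) := by
    intro n
    have hgap : t (n+1) - t n = (b - 1) / (2 * b ^ (n+1)) := by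
      simp only [ht]
      have h1 : (2 * b ^ n) ≠ 0 := by positivity
      have h2 : (2 * b ^ (n+1)) ≠ 0 := by positivity
      field_simp
      ring
    have hgpos : 0 < (b - 1) / (2 * b ^ (n+1)) := by positivity
    have h := hiter (t n) (t (n+1)) (hthalf n) (htmono n) (htlt1 (n+1)).le
    rw [hgap] at h
    have hξp : (0:ℝ) < ξ (t (n+1)) := by linarith [hξt (n+1)]
    have hlog := Real.log_le_log (by linarith [hξt n]) h
    rw [Real.log_mul (by positivity) (by positivity),
        Real.log_mul (ne_of_gt hc₀) (by positivity),
        Real.log_rpow hgpos, Real.log_rpow hξp] at hlog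
    have hlg : Real.log ((b - 1) / (2 * b ^ (n+1))) =
        Real.log (b - 1) - (Real.log 2 + (n+1) * β) := by
      rw [Real.log_div (ne_of_gt hr) (by positivity),
          Real.log_mul (by norm_num) (by positivity), Real.log_pow]
      push_cast; ring
    rw [hlg] at hlog
    simp only [hu, hx]
    rw [hα]
    push_cast
    linarith [hlog]
  -- the last-step inequality
  have hlast : ∀ n, x n ≤ u n + θ * Real.log (ξ 1) := by
    intro n
    have hgap : (1:ℝ) - t n = 1 / (2 * b ^ n) := by simp only [ht]; ring
    have hgpos : (0:ℝ) < 1 / (2 * b ^ n) := by positivity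
    have h := hiter (t n) 1 (hthalf n) (htlt1 n) le_rfl
    rw [hgap] at h
    have hξp : (0:ℝ) < ξ 1 := by linarith
    have hlog := Real.log_le_log (by linarith [hξt n]) h
    rw [Real.log_mul (by positivity) (by positivity),
        Real.log_mul (ne_of_gt hc₀) (by positivity),
        Real.log_rpow hgpos, Real.log_rpow hξp] at hlog
    have hlg : Real.log (1 / (2 * b ^ n)) = -(Real.log 2 + n * β) := by
      rw [one_div, Real.log_inv, Real.log_mul (by norm_num) (by positivity),
          Real.log_pow]
    rw [hlg] at hlog
    simp only [hu, hx]
    have h7 : σ * (Real.log 2 + (n:ℝ) * β) ≤ σ * (α + n * β) :=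
      mul_le_mul_of_nonneg_left (by linarith) hσ.le
    linarith [hlog, h7]
  -- the iteration
  have hind : ∀ N, x 0 ≤ (∑ n ∈ Finset.range N, θ ^ n * u n) + θ ^ N * x N := by
    intro N
    induction N with
    | zero => simp
    | succ N ih =>
      have hpow : (0:ℝ) ≤ θ ^ N := pow_nonneg hθ0.le N
      have h := mul_le_mul_of_nonneg_left (hstep N) hpow
      calc x 0 ≤ (∑ n ∈ Finset.range N, θ ^ n * u n) + θ ^ N * x N := ih
        _ ≤ (∑ n ∈ Finset.range N, θ ^ n * u n) + θ ^ N * (u N + θ * x (N+1)) := by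
            linarith
        _ = (∑ n ∈ Finset.range (N+1), θ ^ n * u n) + θ ^ (N+1) * x (N+1) := by
            rw [Finset.sum_range_succ]; ring
  have hcomb : ∀ N, x 0 ≤ (∑ n ∈ Finset.range (N+1), θ ^ n * u n) +
      θ ^ (N+1) * Real.log (ξ 1) := by
    intro N
    have hpow : (0:ℝ) ≤ θ ^ N := pow_nonneg hθ0.le N
    have h := mul_le_mul_of_nonneg_left (hlast N) hpow
    calc x 0 ≤ (∑ n ∈ Finset.range N, θ ^ n * u n) + θ ^ N * x N := hind N
      _ ≤ (∑ n ∈ Finset.range N, θ ^ n * u n) + θ ^ N * (u N + θ * Real.log (ξ 1)) := by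
          linarith
      _ = (∑ n ∈ Finset.range (N+1), θ ^ n * u n) + θ ^ (N+1) * Real.log (ξ 1) := by
          rw [Finset.sum_range_succ]; ring
  -- summing up
  set S : ℝ := (lc + σ * α) * (1 - θ)⁻¹ + (σ * β) * (θ / (1 - θ) ^ 2) with hS
  have hsum : HasSum (fun n : ℕ => θ ^ n * u n) S := by
    have h1 : HasSum (fun n : ℕ => θ ^ n) (1 - θ)⁻¹ :=
      hasSum_geometric_of_lt_one hθ0.le hθ1
    have h2 : HasSum (fun n : ℕ => (n:ℝ) * θ ^ n) (θ / (1 - θ) ^ 2) :=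
      hasSum_coe_mul_geometric_of_norm_lt_one
        (by rw [Real.norm_eq_abs, abs_of_nonneg hθ0.le]; exact hθ1)
    have h := (h1.mul_left (lc + σ * α)).add (h2.mul_left (σ * β))
    have heq : (fun n : ℕ => θ ^ n * u n) =
        fun n : ℕ => (lc + σ * α) * θ ^ n + (σ * β) * ((n:ℝ) * θ ^ n) := by
      funext n; simp only [hu]; ring
    rw [heq]
    exact h
  have htend1 : Tendsto (fun N : ℕ => ∑ n ∈ Finset.range (N+1), θ ^ n * u n)
      atTop (nhds S) := hsum.tendsto_sum_nat.comp (tendsto_add_atTop_nat 1)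
  have htend2 : Tendsto (fun N : ℕ => θ ^ (N+1) * Real.log (ξ 1)) atTop (nhds 0) := by
    have h := ((tendsto_pow_atTop_nhds_zero_of_lt_one hθ0.le hθ1).comp
      (tendsto_add_atTop_nat 1)).mul_const (Real.log (ξ 1))
    simpa using h
  have htend : Tendsto (fun N : ℕ => (∑ n ∈ Finset.range (N+1), θ ^ n * u n) +
      θ ^ (N+1) * Real.log (ξ 1)) atTop (nhds S) := by
    have := htend1.add htend2
    simpa using this
  have hx0S : x 0 ≤ S := ge_of_tendsto' htend hcomb
  have hG : Real.log (ξ (1/2)) ≤ S := by rw [← ht0]; exact hx0S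
  -- the arithmetic conclusion
  set L : ℝ := α + θ * β / (1 - θ) with hL
  have hSL : S = (lc + σ * L) / (1 - θ) := by
    rw [hS, hL]; field_simp; ring
  have hL0 : 0 ≤ L := by
    have : 0 ≤ θ * β / (1 - θ) := by positivity
    rw [hL]; linarith
  have hKey : L * (b - 1) ≤ 3 * b := by
    have h1 : θ * (b - 1) ≤ 1 - θ := by nlinarith
    have h2 : θ * β / (1 - θ) * (b - 1) ≤ β := by
      rw [div_mul_eq_mul_div, div_le_iff₀ hp]
      have := mul_le_mul_of_nonneg_left h1 hβ0
      nlinarith [this]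
    have h3 : α * (b - 1) ≤ 2 * Real.log 2 := by
      have h5 : Real.log ((b - 1)⁻¹) ≤ (b - 1)⁻¹ - 1 :=
        Real.log_le_sub_one_of_pos (by positivity)
      rw [Real.log_inv] at h5
      have h6 : -((b - 1) * Real.log (b - 1)) ≤ 2 - b := by
        have h7 := mul_le_mul_of_nonneg_left h5 hr.le
        have hinv : (b - 1) * ((b - 1)⁻¹ - 1) = 2 - b := by field_simp; ring
        linarith [h7, hinv]
      have hlog2 : 1 ≤ 2 * Real.log 2 := by linarith [Real.log_two_gt_d9]
      have hb2' : 0 ≤ 2 - b := by linarith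
      have hint1 := mul_le_mul_of_nonneg_left hβ2 hr.le
      have hint2 : 0 ≤ (2 - b) * (2 * Real.log 2 - 1) :=
        mul_nonneg hb2' (by linarith)
      rw [hα]
      nlinarith [h6, hint1, hint2]
    have hl2 : Real.log 2 ≤ 1 := by linarith [Real.log_two_lt_d9]
    rw [hL]
    nlinarith [h2, h3, hβ2, hl2, hb1]
  have hfinal : Real.log (ξ (1/2)) ≤
      3 * (σ * b / ((1 - b * θ) * (b - 1))) + lc / (1 - b * θ) := by
    refine aux_key θ σ b lc L (Real.log (ξ (1/2))) hθ0 hθ1 hσ hb1 hbθ hL0 hKey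
      (Real.log_nonneg hξh) ?_
    rw [← hSL]; exact hG
  have hrhs : Real.exp 3 ^ (σ * b / ((1 - b * θ) * (b - 1))) * c₀ ^ (1 / (1 - b * θ)) =
      Real.exp (3 * (σ * b / ((1 - b * θ) * (b - 1))) + lc / (1 - b * θ)) := by
    rw [Real.exp_add, Real.rpow_def_of_pos (Real.exp_pos 3), Real.log_exp,
        Real.rpow_def_of_pos hc₀, ← hlc]
    ring_nf
  rw [hrhs]
  calc ξ (1/2) = Real.exp (Real.log (ξ (1/2))) := (Real.exp_log (by linarith)).symm
    _ ≤ _ := Real.exp_le_exp.2 hfinal
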